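/- Let S be a closed densely defined operator on a Hilbert space H that decomposes with respect to a (not necessarily orthogonal) direct sum H = H₁ ⊕ H₂. Then the adjoint S* decomposes with respect to H = H₂⊥ ⊕ H₁⊥, and σ(S*|H₂⊥) = σ(S|H₁)* (complex conjugation) and σ(S*|H₁⊥) = σ(S|H₂)*. -/

import Mathlib

/-- `Rz` is a resolvent operator at `z` for the restriction of `S` to the invariant
subspace `W`. -/
def HasResOn {V : Type*} [NormedAddCommGroup V] [NormedSpace ℂ V]
    (S : V →ₗ.[ℂ] V) (W : Submodule ℂ V) (z : ℂ) (Rz : ↥W →L[ℂ] ↥W) : Prop :=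
  (∀ y : W, ∃ h : ((Rz y : V) ∈ S.domain), S ⟨(Rz y : V), h⟩ - z • (Rz y : V) = (y : V)) ∧
  (∀ x : S.domain, ((x : V) ∈ W) →
    ∃ h : S x - z • (x : V) ∈ W, ((Rz ⟨S x - z • (x : V), h⟩ : V) = (x : V)))

section AuxSection

set_option linter.unusedSectionVars false

open scoped ComplexConjugate

noncomputable section

namespace AdjDecompAux

variable {H : Type*} [NormedAddCommGroup H] [InnerProductSpace ℂ H] [CompleteSpace H]

local notation "⟪" x ", " y "⟫" => @inner ℂ _ _ x y

/-- Graph characterization of the adjoint. -/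
theorem mem_adjoint_graph_iff (S : H →ₗ.[ℂ] H) (hdense : Dense (S.domain : Set H))
    (y w : H) : (y, w) ∈ S.adjoint.graph ↔ ∀ x : S.domain, ⟪w, (x : H)⟫ = ⟪y, S x⟫ := by
  constructor
  · rintro hmem x
    obtain ⟨y', hy1, hy2⟩ := S.adjoint.mem_graph_iff.mp hmem
    have h := (LinearPMap.adjoint_isFormalAdjoint hdense) y' x
    rw [hy1, hy2] at h
    exact h
  · intro h
    have hy : y ∈ S.adjoint.domain := LinearPMap.mem_adjoint_domain_of_exists _ ⟨w, h⟩
    have h2 : S.adjoint ⟨y, hy⟩ = w := LinearPMap.adjoint_apply_eq hdense ⟨y, hy⟩ h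
    exact S.adjoint.mem_graph_iff.mpr ⟨⟨y, hy⟩, rfl, h2⟩

/-- The graph of `S` inside the Hilbert space `WithLp 2 (H × H)`. -/
def graphL2 (S : H →ₗ.[ℂ] H) : Submodule ℂ (WithLp 2 (H × H)) :=
  S.graph.comap ((WithLp.prodContinuousLinearEquiv 2 ℂ H H : WithLp 2 (H × H) →L[ℂ] H × H) :
    WithLp 2 (H × H) →ₗ[ℂ] H × H)

theorem mem_graphL2 (S : H →ₗ.[ℂ] H) (v : WithLp 2 (H × H)) :
    v ∈ graphL2 S ↔ (WithLp.prodContinuousLinearEquiv 2 ℂ H H v) ∈ S.graph := Iff.rfl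

theorem isClosed_graphL2 (S : H →ₗ.[ℂ] H) (hclosed : IsClosed (S.graph : Set (H × H))) :
    IsClosed ((graphL2 S : Set (WithLp 2 (H × H)))) :=
  hclosed.preimage (WithLp.prodContinuousLinearEquiv 2 ℂ H H).continuous

/-- Elements of the orthogonal complement of the graph give adjoint graph elements. -/
theorem orth_graphL2 (S : H →ₗ.[ℂ] H) (hdense : Dense (S.domain : Set H))
    (v : WithLp 2 (H × H)) (hv : v ∈ (graphL2 S)ᗮ) :
    (((WithLp.prodContinuousLinearEquiv 2 ℂ H H) v).2,
      -((WithLp.prodContinuousLinearEquiv 2 ℂ H H) v).1) ∈ S.adjoint.graph := by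
  set e := WithLp.prodContinuousLinearEquiv 2 ℂ H H
  rw [mem_adjoint_graph_iff S hdense]
  intro x
  have hx : (e.symm ((x : H), S x)) ∈ graphL2 S := by
    rw [mem_graphL2]
    exact S.mem_graph x
  have h0 := (Submodule.mem_orthogonal _ v).mp hv _ hx
  have h1 : ⟪e.symm ((x : H), S x), v⟫ = ⟪(x : H), (e v).1⟫ + ⟪S x, (e v).2⟫ :=
    WithLp.prod_inner_apply _ _
  rw [h1] at h0
  have h2 : ⟪(x : H), (e v).1⟫ = -⟪S x, (e v).2⟫ := by linear_combination h0
  calc ⟪-(e v).1, (x : H)⟫ = -⟪(e v).1, (x : H)⟫ := by rw [inner_neg_left]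
    _ = -(starRingEnd ℂ) ⟪(x : H), (e v).1⟫ := by rw [inner_conj_symm]
    _ = (starRingEnd ℂ) ⟪S x, (e v).2⟫ := by rw [h2]; simp
    _ = ⟪(e v).2, S x⟫ := by rw [inner_conj_symm]


/-- membership in a doubly-orthogonal-complemented closed graph -/
theorem mem_of_orth (S : H →ₗ.[ℂ] H) (hclosed : IsClosed (S.graph : Set (H × H)))
    (k : WithLp 2 (H × H)) (hk : ∀ v ∈ (graphL2 S)ᗮ, ⟪v, k⟫ = 0) : k ∈ graphL2 S := by
  haveI : CompleteSpace (graphL2 S) := (isClosed_graphL2 S hclosed).completeSpace_coe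
  have : k ∈ (graphL2 S)ᗮᗮ := by
    rw [Submodule.mem_orthogonal]
    intro u hu
    exact hk u hu
  rwa [Submodule.orthogonal_orthogonal] at this

theorem adjoint_dense (S : H →ₗ.[ℂ] H) (hdense : Dense (S.domain : Set H))
    (hclosed : IsClosed (S.graph : Set (H × H))) :
    Dense (S.adjoint.domain : Set H) := by
  rw [Submodule.dense_iff_topologicalClosure_eq_top, Submodule.topologicalClosure_eq_top_iff]
  rw [eq_bot_iff]
  intro u hu
  rw [Submodule.mem_bot]
  set e := WithLp.prodContinuousLinearEquiv 2 ℂ H H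
  have hk : e.symm (0, u) ∈ graphL2 S := by
    apply mem_of_orth S hclosed
    intro v hv
    have hb := S.adjoint.mem_domain_of_mem_graph (orth_graphL2 S hdense v hv)
    have h1 : ⟪v, e.symm (0, u)⟫ = ⟪(e v).1, (0 : H)⟫ + ⟪(e v).2, u⟫ :=
      WithLp.prod_inner_apply _ _
    rw [h1, inner_zero_right, zero_add]
    exact (Submodule.mem_orthogonal _ u).mp hu _ hb
  rw [mem_graphL2] at hk
  change ((0 : H), u) ∈ S.graph at hk
  obtain ⟨x, hx1, hx2⟩ := S.mem_graph_iff.mp hk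
  have hx0 : x = 0 := Subtype.ext (by simpa using hx1)
  rw [hx0] at hx2
  simpa using hx2.symm


theorem adjoint_adjoint (S : H →ₗ.[ℂ] H) (hdense : Dense (S.domain : Set H))
    (hclosed : IsClosed (S.graph : Set (H × H))) : S.adjoint.adjoint = S := by
  have hdense' := adjoint_dense S hdense hclosed
  apply LinearPMap.eq_of_eq_graph
  apply le_antisymm
  · intro p hp
    obtain ⟨y, w⟩ := p
    rw [mem_adjoint_graph_iff S.adjoint hdense'] at hp
    set e := WithLp.prodContinuousLinearEquiv 2 ℂ H H with he
    have hk : e.symm (y, w) ∈ graphL2 S := by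
      apply mem_of_orth S hclosed
      intro v hv
      have hb := orth_graphL2 S hdense v hv
      obtain ⟨xb, hxb1, hxb2⟩ := S.adjoint.mem_graph_iff.mp hb
      rw [← he] at hxb1 hxb2
      simp only at hxb1 hxb2
      have h1 : ⟪v, e.symm (y, w)⟫ = ⟪(e v).1, y⟫ + ⟪(e v).2, w⟫ :=
        WithLp.prod_inner_apply _ _
      have h2 := hp xb
      rw [hxb2] at h2
      rw [h1]
      have h3 : ⟪(e v).2, w⟫ = (starRingEnd ℂ) ⟪w, (e v).2⟫ := (inner_conj_symm _ _).symm
      rw [hxb1] at h2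
      rw [h3, h2]
      simp
    rw [mem_graphL2] at hk
    exact hk
  · intro p hp
    obtain ⟨x, hx1, hx2⟩ := S.mem_graph_iff.mp hp
    obtain ⟨y, w⟩ := p
    simp only at hx1 hx2
    subst hx1 hx2
    rw [mem_adjoint_graph_iff S.adjoint hdense']
    intro v
    calc ⟪S x, (v : H)⟫ = (starRingEnd ℂ) ⟪(v : H), S x⟫ := (inner_conj_symm _ _).symm
      _ = (starRingEnd ℂ) ⟪S.adjoint v, (x : H)⟫ := by
          rw [(LinearPMap.adjoint_isFormalAdjoint hdense) v x]
      _ = ⟪(x : H), S.adjoint v⟫ := inner_conj_symm _ _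


section Decomp

variable (S : H →ₗ.[ℂ] H) (hdense : Dense (S.domain : Set H))
  (H₁ H₂ : Submodule ℂ H) (hH₁ : IsClosed (H₁ : Set H)) (hH₂ : IsClosed (H₂ : Set H))
  (hcompl : IsCompl H₁ H₂)

/-- The continuous projection onto `H₁` along `H₂`, as a map `H →L[ℂ] H`. -/
def projCLM : H →L[ℂ] H :=
  H₁.subtypeL.comp (H₁.linearProjOfClosedCompl H₂ hcompl hH₁ hH₂)

theorem projCLM_mem (x : H) : projCLM H₁ H₂ hH₁ hH₂ hcompl x ∈ H₁ := by
  simp [projCLM]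

theorem projCLM_left {x : H} (hx : x ∈ H₁) : projCLM H₁ H₂ hH₁ hH₂ hcompl x = x := by
  have := Submodule.linearProjOfIsCompl_apply_left hcompl ⟨x, hx⟩
  simp only [projCLM, ContinuousLinearMap.comp_apply]
  rw [Submodule.coe_continuous_linearProjOfClosedCompl']
  rw [this]
  rfl

theorem projCLM_right {x : H} (hx : x ∈ H₂) : projCLM H₁ H₂ hH₁ hH₂ hcompl x = 0 := by
  simp only [projCLM, ContinuousLinearMap.comp_apply]
  rw [Submodule.coe_continuous_linearProjOfClosedCompl']
  rw [Submodule.projectionOnto_apply_right hcompl ⟨x, hx⟩]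
  simp

theorem projCLM_sub_mem (x : H) : x - projCLM H₁ H₂ hH₁ hH₂ hcompl x ∈ H₂ := by
  have h := Submodule.projection_add_projection_eq_self hcompl x
  have hP : projCLM H₁ H₂ hH₁ hH₂ hcompl x = (H₁.projectionOnto H₂ hcompl x : H) := rfl
  have h2 : x - (H₁.projectionOnto H₂ hcompl x : H)
      = (H₂.projectionOnto H₁ hcompl.symm x : H) := sub_eq_iff_eq_add'.mpr h.symm
  rw [hP, h2]
  exact (H₂.projectionOnto H₁ hcompl.symm x).2


variable (hinv₁ : ∀ x : S.domain, (x : H) ∈ H₁ → S x ∈ H₁)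
  (hinv₂ : ∀ x : S.domain, (x : H) ∈ H₂ → S x ∈ H₂)
  (hsplit : ∀ x ∈ S.domain, ∃ x₁ ∈ S.domain ⊓ H₁, ∃ x₂ ∈ S.domain ⊓ H₂, x = x₁ + x₂)

include hdense hH₁ hH₂ hcompl hinv₁ hinv₂ hsplit in
theorem decomp_aux :
    IsCompl H₂ᗮ H₁ᗮ ∧
    (∀ y : S.adjoint.domain, (y : H) ∈ H₂ᗮ → S.adjoint y ∈ H₂ᗮ) ∧
    (∀ y : S.adjoint.domain, (y : H) ∈ H₁ᗮ → S.adjoint y ∈ H₁ᗮ) ∧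
    (∀ y ∈ S.adjoint.domain,
      ∃ y₁ ∈ S.adjoint.domain ⊓ H₂ᗮ, ∃ y₂ ∈ S.adjoint.domain ⊓ H₁ᗮ, y = y₁ + y₂) := by
  set P := projCLM H₁ H₂ hH₁ hH₂ hcompl with hPdef
  set Q := ContinuousLinearMap.adjoint P with hQdef
  have hQmem : ∀ w : H, Q w ∈ H₂ᗮ := by
    intro w
    rw [Submodule.mem_orthogonal]
    intro u hu
    have h1 : ⟪Q w, u⟫ = ⟪w, P u⟫ := ContinuousLinearMap.adjoint_inner_left P u w
    rw [projCLM_right H₁ H₂ hH₁ hH₂ hcompl hu, inner_zero_right] at h1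
    rw [← inner_conj_symm, h1, map_zero]
  have hQfix : ∀ w ∈ H₂ᗮ, Q w = w := by
    intro w hw
    apply ext_inner_right ℂ
    intro x
    rw [ContinuousLinearMap.adjoint_inner_left]
    have h2 : ⟪w, x - P x⟫ = 0 :=
      (Submodule.mem_orthogonal' _ _).mp hw _ (projCLM_sub_mem H₁ H₂ hH₁ hH₂ hcompl x)
    rw [inner_sub_right] at h2
    linear_combination -h2
  have hQzero : ∀ w ∈ H₁ᗮ, Q w = 0 := by
    intro w hw
    apply ext_inner_right ℂ
    intro x
    rw [ContinuousLinearMap.adjoint_inner_left, inner_zero_left]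
    exact (Submodule.mem_orthogonal' _ _).mp hw _ (projCLM_mem H₁ H₂ hH₁ hH₂ hcompl x)
  have hQsub : ∀ w : H, w - Q w ∈ H₁ᗮ := by
    intro w
    rw [Submodule.mem_orthogonal]
    intro u hu
    rw [inner_sub_right]
    have h1 : ⟪u, Q w⟫ = (starRingEnd ℂ) ⟪Q w, u⟫ := (inner_conj_symm _ _).symm
    rw [ContinuousLinearMap.adjoint_inner_left,
      projCLM_left H₁ H₂ hH₁ hH₂ hcompl hu, inner_conj_symm] at h1
    rw [h1, sub_self]
  have hPdom : ∀ x : S.domain, ∃ hP : P (x : H) ∈ S.domain, S ⟨P (x : H), hP⟩ = P (S x) := by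
    intro x
    obtain ⟨x₁, ⟨hx₁d, hx₁1⟩, x₂, ⟨hx₂d, hx₂2⟩, hsum⟩ := hsplit x x.2
    have hPx : P (x : H) = x₁ := by
      rw [hsum, map_add, projCLM_left H₁ H₂ hH₁ hH₂ hcompl hx₁1,
        projCLM_right H₁ H₂ hH₁ hH₂ hcompl hx₂2, add_zero]
    have hxd : x = (⟨x₁, hx₁d⟩ : S.domain) + ⟨x₂, hx₂d⟩ := Subtype.ext (by simpa using hsum)
    have hSx : S x = S ⟨x₁, hx₁d⟩ + S ⟨x₂, hx₂d⟩ := by rw [hxd, S.map_add]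
    have hPSx : P (S x) = S ⟨x₁, hx₁d⟩ := by
      rw [hSx, map_add, projCLM_left H₁ H₂ hH₁ hH₂ hcompl (hinv₁ _ hx₁1),
        projCLM_right H₁ H₂ hH₁ hH₂ hcompl (hinv₂ _ hx₂2), add_zero]
    refine ⟨hPx ▸ hx₁d, ?_⟩
    rw [hPSx]
    congr 1
    exact Subtype.ext hPx
  have hQdom : ∀ y : S.adjoint.domain, ∃ hQy : Q (y : H) ∈ S.adjoint.domain,
      S.adjoint ⟨Q (y : H), hQy⟩ = Q (S.adjoint y) := by
    intro y
    have hg : (Q (y : H), Q (S.adjoint y)) ∈ S.adjoint.graph := by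
      rw [mem_adjoint_graph_iff S hdense]
      intro x
      obtain ⟨hPx, hPSx⟩ := hPdom x
      calc ⟪Q (S.adjoint y), (x : H)⟫ = ⟪S.adjoint y, P (x : H)⟫ :=
            ContinuousLinearMap.adjoint_inner_left P _ _
        _ = ⟪(y : H), S ⟨P (x : H), hPx⟩⟫ := (LinearPMap.adjoint_isFormalAdjoint hdense) y ⟨P (x : H), hPx⟩
        _ = ⟪(y : H), P (S x)⟫ := by rw [hPSx]
        _ = ⟪Q (y : H), S x⟫ := (ContinuousLinearMap.adjoint_inner_left P _ _).symm
    obtain ⟨yq, h1, h2⟩ := S.adjoint.mem_graph_iff.mp hg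
    simp only at h1 h2
    refine ⟨h1 ▸ yq.2, ?_⟩
    rw [← h2]
    congr 1
    exact Subtype.ext h1.symm
  refine ⟨?_, ?_, ?_, ?_⟩
  · constructor
    · rw [Submodule.disjoint_def]
      intro v hv2 hv1
      rw [← hQfix v hv2, hQzero v hv1]
    · rw [codisjoint_iff, eq_top_iff]
      intro v _
      rw [Submodule.mem_sup]
      exact ⟨Q v, hQmem v, v - Q v, hQsub v, by abel⟩
  · intro y hy
    obtain ⟨hQy, hkey⟩ := hQdom y
    have h1 : S.adjoint y = Q (S.adjoint y) := by
      rw [← hkey]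
      congr 1
      exact Subtype.ext (hQfix _ hy).symm
    rw [h1]
    exact hQmem _
  · intro y hy
    obtain ⟨hQy, hkey⟩ := hQdom y
    have h0 : (⟨Q (y : H), hQy⟩ : S.adjoint.domain) = 0 := Subtype.ext (by simpa using hQzero _ hy)
    rw [h0] at hkey
    simp only [LinearPMap.map_zero] at hkey
    have := hQsub (S.adjoint y)
    rwa [← hkey, sub_zero] at this
  · intro y hy
    obtain ⟨hQy, hkey⟩ := hQdom ⟨y, hy⟩
    exact ⟨Q y, ⟨hQy, hQmem y⟩, y - Q y, ⟨Submodule.sub_mem _ hy hQy, hQsub y⟩, by abel⟩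


include hdense hH₁ hH₂ hcompl hinv₁ hinv₂ hsplit in
theorem res_forward
    (hadj_inv : ∀ y : S.adjoint.domain, (y : H) ∈ H₂ᗮ → S.adjoint y ∈ H₂ᗮ) (z : ℂ)
    (h : ∃ Rz : ↥H₁ →L[ℂ] ↥H₁, HasResOn S H₁ z Rz) :
    ∃ R' : ↥H₂ᗮ →L[ℂ] ↥H₂ᗮ, HasResOn S.adjoint H₂ᗮ (starRingEnd ℂ z) R' := by
  obtain ⟨Rz, hRa, hRb⟩ := h
  set pr := H₁.linearProjOfClosedCompl H₂ hcompl hH₁ hH₂ with hprdef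
  set T : H →L[ℂ] H := H₁.subtypeL ∘L (Rz ∘L pr) with hTdef
  set A : H →L[ℂ] H := ContinuousLinearMap.adjoint T with hAdef
  have hpr_coe : ∀ x : H, ((pr x : H)) = projCLM H₁ H₂ hH₁ hH₂ hcompl x := fun x => rfl
  have hAmem : ∀ w : H, A w ∈ H₂ᗮ := by
    intro w
    rw [Submodule.mem_orthogonal]
    intro u hu
    have hTu : T u = 0 := by
      have : pr u = 0 := by
        apply Subtype.ext
        rw [hpr_coe, projCLM_right H₁ H₂ hH₁ hH₂ hcompl hu]
        rfl
      simp [hTdef, this]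
    have h1 : ⟪A w, u⟫ = ⟪w, T u⟫ := ContinuousLinearMap.adjoint_inner_left T u w
    rw [hTu, inner_zero_right] at h1
    rw [← inner_conj_symm, h1, map_zero]
  refine ⟨(A.comp H₂ᗮ.subtypeL).codRestrict H₂ᗮ (fun y => hAmem y), ?_, ?_⟩
  · -- property (a)
    intro y
    have hg : ((A (y : H)), ((y : H) + (starRingEnd ℂ z) • A (y : H))) ∈ S.adjoint.graph := by
      rw [mem_adjoint_graph_iff S hdense]
      intro x
      obtain ⟨x₁, ⟨hx₁d, hx₁1⟩, x₂, ⟨hx₂d, hx₂2⟩, hsum⟩ := hsplit x x.2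
      have hxd : x = (⟨x₁, hx₁d⟩ : S.domain) + ⟨x₂, hx₂d⟩ := Subtype.ext (by simpa using hsum)
      have hSx : S x = S ⟨x₁, hx₁d⟩ + S ⟨x₂, hx₂d⟩ := by rw [hxd, S.map_add]
      have hprx : pr (x : H) = ⟨x₁, hx₁1⟩ := by
        apply Subtype.ext
        rw [hpr_coe, hsum, map_add, projCLM_left H₁ H₂ hH₁ hH₂ hcompl hx₁1,
          projCLM_right H₁ H₂ hH₁ hH₂ hcompl hx₂2, add_zero]
      have hprSx : pr (S x) = ⟨S ⟨x₁, hx₁d⟩, hinv₁ _ hx₁1⟩ := by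
        apply Subtype.ext
        rw [hpr_coe, hSx, map_add, projCLM_left H₁ H₂ hH₁ hH₂ hcompl (hinv₁ _ hx₁1),
          projCLM_right H₁ H₂ hH₁ hH₂ hcompl (hinv₂ _ hx₂2), add_zero]
      obtain ⟨hmem₁, hres₁⟩ := hRb ⟨x₁, hx₁d⟩ hx₁1
      -- hres₁ : (Rz ⟨S ⟨x₁,hx₁d⟩ - z • x₁, hmem₁⟩ : H) = x₁
      have hsplit₁ : (⟨S ⟨x₁, hx₁d⟩, hinv₁ _ hx₁1⟩ : ↥H₁)
          = ⟨S ⟨x₁, hx₁d⟩ - z • x₁, hmem₁⟩ + z • ⟨x₁, hx₁1⟩ := by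
        apply Subtype.ext
        simp
      have hTSx : T (S x) = x₁ + z • (T (x : H)) := by
        have h1 : T (S x) = (Rz (pr (S x)) : H) := rfl
        have h2 : T (x : H) = (Rz (pr (x : H)) : H) := rfl
        rw [h1, h2, hprx, hprSx, hsplit₁, map_add, map_smul]
        push_cast
        rw [hres₁]
      have hy2 : ⟪(y : H), x₂⟫ = 0 := (Submodule.mem_orthogonal' _ _).mp y.2 _ hx₂2
      have hAy1 : ⟪A (y : H), S x⟫ = ⟪(y : H), T (S x)⟫ :=
        ContinuousLinearMap.adjoint_inner_left T _ _
      have hAy2 : ⟪A (y : H), (x : H)⟫ = ⟪(y : H), T (x : H)⟫ :=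
        ContinuousLinearMap.adjoint_inner_left T _ _
      rw [inner_add_left, inner_smul_left, hAy1, hAy2, hTSx, inner_add_right, inner_smul_right]
      have hyx : ⟪(y : H), (x : H)⟫ = ⟪(y : H), x₁⟫ + ⟪(y : H), x₂⟫ := by
        rw [← inner_add_right, ← hsum]
      rw [hyx, hy2, add_zero]
      ring_nf
      simp [RingHom.id_apply]
      ring
    obtain ⟨yq, h1, h2⟩ := S.adjoint.mem_graph_iff.mp hg
    simp only at h1 h2
    have hcoe : (((A.comp H₂ᗮ.subtypeL).codRestrict H₂ᗮ (fun y => hAmem y)) y : H)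
        = A (y : H) := rfl
    have hmem : (((A.comp H₂ᗮ.subtypeL).codRestrict H₂ᗮ (fun y => hAmem y)) y : H)
        ∈ S.adjoint.domain := by rw [hcoe]; exact h1 ▸ yq.2
    refine ⟨hmem, ?_⟩
    have h3 : S.adjoint ⟨(((A.comp H₂ᗮ.subtypeL).codRestrict H₂ᗮ (fun y => hAmem y)) y : H), hmem⟩
        = (y : H) + (starRingEnd ℂ) z • A (y : H) := by
      rw [← h2]
      congr 1
      apply Subtype.ext
      rw [hcoe]
      exact h1.symm
    rw [h3, hcoe]
    abel
  · -- property (b)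
    intro y hy
    have hSy : S.adjoint y - (starRingEnd ℂ z) • (y : H) ∈ H₂ᗮ :=
      Submodule.sub_mem _ (hadj_inv y hy) (Submodule.smul_mem _ _ hy)
    refine ⟨hSy, ?_⟩
    have hcoe : ∀ w : ↥H₂ᗮ, (((A.comp H₂ᗮ.subtypeL).codRestrict H₂ᗮ (fun y => hAmem y)) w : H)
        = A (w : H) := fun w => rfl
    rw [hcoe]
    apply ext_inner_right ℂ
    intro x
    have hAx : ⟪A (S.adjoint y - (starRingEnd ℂ z) • (y : H)), x⟫
        = ⟪S.adjoint y - (starRingEnd ℂ z) • (y : H), T x⟫ :=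
      ContinuousLinearMap.adjoint_inner_left T _ _
    obtain ⟨hmem, heq⟩ := hRa (pr x)
    -- heq : S ⟨(Rz (pr x) : H), hmem⟩ - z • (Rz (pr x) : H) = (pr x : H)
    have hTx : T x = (Rz (pr x) : H) := rfl
    have hfa : ⟪S.adjoint y, (Rz (pr x) : H)⟫ = ⟪(y : H), S ⟨(Rz (pr x) : H), hmem⟩⟫ :=
      (LinearPMap.adjoint_isFormalAdjoint hdense) y ⟨(Rz (pr x) : H), hmem⟩
    have hsub : ⟪(y : H), (x : H) - (pr x : H)⟫ = 0 := by
      apply (Submodule.mem_orthogonal' _ _).mp hy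
      rw [hpr_coe]
      exact projCLM_sub_mem H₁ H₂ hH₁ hH₂ hcompl x
    rw [hAx, hTx, inner_sub_left, inner_smul_left, hfa]
    have heq2 : ⟪(y : H), S ⟨(Rz (pr x) : H), hmem⟩⟫ - z * ⟪(y : H), (Rz (pr x) : H)⟫
        = ⟪(y : H), (pr x : H)⟫ := by
      rw [← inner_smul_right, ← inner_sub_right, heq]
    rw [inner_sub_right] at hsub
    simp only [RingHomCompTriple.comp_apply, RingHom.id_apply, Complex.conj_conj]
    linear_combination heq2 - hsub
  
end Decomp

theorem hasResOn_congr {S S' : H →ₗ.[ℂ] H} (hS : S = S') {W W' : Submodule ℂ H}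
    (hW : W = W') {z z' : ℂ} (hz : z = z')
    (h : ∃ R : ↥W →L[ℂ] ↥W, HasResOn S W z R) :
    ∃ R : ↥W' →L[ℂ] ↥W', HasResOn S' W' z' R := by
  subst hS hW hz
  exact h

end AdjDecompAux

end

end AuxSection

/-- if a closed densely defined operator `S` on a Hilbert space decomposes
with respect to `H = H₁ ⊕ H₂`, then `S*` decomposes with respect to
`H = H₂ᗮ ⊕ H₁ᗮ`, with `σ(S*|H₂ᗮ) = σ(S|H₁)*` and `σ(S*|H₁ᗮ) = σ(S|H₂)*`. -/
theorem adjoint_decomposes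
    {H : Type*} [NormedAddCommGroup H] [InnerProductSpace ℂ H] [CompleteSpace H]
    (S : H →ₗ.[ℂ] H) (hdense : Dense (S.domain : Set H))
    (hclosed : IsClosed (S.graph : Set (H × H)))
    (H₁ H₂ : Submodule ℂ H) (hH₁ : IsClosed (H₁ : Set H)) (hH₂ : IsClosed (H₂ : Set H))
    (hcompl : IsCompl H₁ H₂)
    (hinv₁ : ∀ x : S.domain, (x : H) ∈ H₁ → S x ∈ H₁)
    (hinv₂ : ∀ x : S.domain, (x : H) ∈ H₂ → S x ∈ H₂)
    (hsplit : ∀ x ∈ S.domain,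
      ∃ x₁ ∈ S.domain ⊓ H₁, ∃ x₂ ∈ S.domain ⊓ H₂, x = x₁ + x₂) :
    -- S* decomposes with respect to H = H₂ᗮ ⊕ H₁ᗮ
    IsCompl H₂ᗮ H₁ᗮ ∧
    (∀ y : S.adjoint.domain, (y : H) ∈ H₂ᗮ → S.adjoint y ∈ H₂ᗮ) ∧
    (∀ y : S.adjoint.domain, (y : H) ∈ H₁ᗮ → S.adjoint y ∈ H₁ᗮ) ∧
    (∀ y ∈ S.adjoint.domain,
      ∃ y₁ ∈ S.adjoint.domain ⊓ H₂ᗮ, ∃ y₂ ∈ S.adjoint.domain ⊓ H₁ᗮ, y = y₁ + y₂) ∧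
    -- σ(S*|H₂ᗮ) = σ(S|H₁)*, expressed via equality of resolvent sets
    (∀ z : ℂ, (∃ Rz : ↥H₁ →L[ℂ] ↥H₁, HasResOn S H₁ z Rz) ↔
      (∃ Rz : ↥H₂ᗮ →L[ℂ] ↥H₂ᗮ, HasResOn S.adjoint H₂ᗮ (starRingEnd ℂ z) Rz)) ∧
    -- σ(S*|H₁ᗮ) = σ(S|H₂)*
    (∀ z : ℂ, (∃ Rz : ↥H₂ →L[ℂ] ↥H₂, HasResOn S H₂ z Rz) ↔
      (∃ Rz : ↥H₁ᗮ →L[ℂ] ↥H₁ᗮ, HasResOn S.adjoint H₁ᗮ (starRingEnd ℂ z) Rz)) := by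
  have hsplitSwap : ∀ x ∈ S.domain,
      ∃ x₂ ∈ S.domain ⊓ H₂, ∃ x₁ ∈ S.domain ⊓ H₁, x = x₂ + x₁ := by
    intro x hx
    obtain ⟨x₁, h1, x₂, h2, h⟩ := hsplit x hx
    exact ⟨x₂, h2, x₁, h1, by rw [h]; abel⟩
  obtain ⟨c1, c2, c3, c4⟩ :=
    AdjDecompAux.decomp_aux S hdense H₁ H₂ hH₁ hH₂ hcompl hinv₁ hinv₂ hsplit
  obtain ⟨c1s, c2s, c3s, c4s⟩ :=
    AdjDecompAux.decomp_aux S hdense H₂ H₁ hH₂ hH₁ hcompl.symm hinv₂ hinv₁ hsplitSwap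
  have hdense2 := AdjDecompAux.adjoint_dense S hdense hclosed
  have hSS : S.adjoint.adjoint = S := AdjDecompAux.adjoint_adjoint S hdense hclosed
  haveI : CompleteSpace H₁ := hH₁.completeSpace_coe
  haveI : CompleteSpace H₂ := hH₂.completeSpace_coe
  have hOO1 : H₁ᗮᗮ = H₁ := Submodule.orthogonal_orthogonal H₁
  have hOO2 : H₂ᗮᗮ = H₂ := Submodule.orthogonal_orthogonal H₂
  refine ⟨c1, c2, c3, c4, ?_, ?_⟩
  · intro z
    constructor
    · exact AdjDecompAux.res_forward S hdense H₁ H₂ hH₁ hH₂ hcompl hinv₁ hinv₂ hsplit c2 z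
    · intro h
      have hinv₁d : ∀ x : S.adjoint.adjoint.domain,
          (x : H) ∈ H₁ᗮᗮ → S.adjoint.adjoint x ∈ H₁ᗮᗮ := by
        rw [hSS, hOO1]
        exact hinv₁
      have h2 := AdjDecompAux.res_forward S.adjoint hdense2 H₂ᗮ H₁ᗮ
        (Submodule.isClosed_orthogonal _) (Submodule.isClosed_orthogonal _)
        c1 c2 c3 c4 hinv₁d (starRingEnd ℂ z) h
      exact AdjDecompAux.hasResOn_congr hSS hOO1 (Complex.conj_conj z) h2
  · intro z
    constructor
    · exact AdjDecompAux.res_forward S hdense H₂ H₁ hH₂ hH₁ hcompl.symm hinv₂ hinv₁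
        hsplitSwap c2s z
    · intro h
      have hinv₂d : ∀ x : S.adjoint.adjoint.domain,
          (x : H) ∈ H₂ᗮᗮ → S.adjoint.adjoint x ∈ H₂ᗮᗮ := by
        rw [hSS, hOO2]
        exact hinv₂
      have h2 := AdjDecompAux.res_forward S.adjoint hdense2 H₁ᗮ H₂ᗮ
        (Submodule.isClosed_orthogonal _) (Submodule.isClosed_orthogonal _)
        c1s c2s c3s c4s hinv₂d (starRingEnd ℂ z) h
      exact AdjDecompAux.hasResOn_congr hSS hOO2 (Complex.conj_conj z) h2
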